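/- arXiv:1612.05814 — 2 statements merged into one kernel-verified Lean document; each statement's English description precedes it below -/
import Mathlib

section
/- The map cl : X^N → X^N defined by cl(∅,P) = (∅,P) for every partition P, and cl(A,P) = (Ā, P ∨ P^A_⊥) for nonempty A (where Ā is the block of P ∨ P^A_⊥ containing A) is a closure operator on the product lattice X^N: for all (A,P),(B,Q) ∈ X^N it satisfies (i) cl(A,P) ⊒ (A,P), (ii) (A,P) ⊒ (B,Q) implies cl(A,P) ⊒ cl(B,Q), and (iii) cl(cl(A,P)) = cl(A,P). -/
open scoped BigOperators

/-- `modp n A` is the modular partition `P^A_⊥` of `Fin n` whose unique (possibly)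
non-singleton block is `A`, all other blocks being singletons. -/
def modp (n : ℕ) (A : Set (Fin n)) : Setoid (Fin n) where
  r x y := x = y ∨ (x ∈ A ∧ y ∈ A)
  iseqv := by
    refine ⟨fun _ => Or.inl rfl, ?_, ?_⟩
    · rintro x y (rfl | ⟨hx, hy⟩)
      · exact Or.inl rfl
      · exact Or.inr ⟨hy, hx⟩
    · rintro x y z (rfl | ⟨hx, hy⟩) h
      · exact h
      · rcases h with rfl | ⟨hy', hz⟩
        · exact Or.inr ⟨hx, hy⟩
        · exact Or.inr ⟨hx, hz⟩

/-- The product `X^N = 2^N × 𝒫^N` of the subset lattice and the partition lattice,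
ordered componentwise. -/
abbrev XN (n : ℕ) := Set (Fin n) × Setoid (Fin n)

/-- The closure operator `cl` on `X^N`:  `cl(∅,P) = (∅,P)` and, for `A ≠ ∅`,
`cl(A,P) = (Ā, P ⊔ P^A_⊥)` where `Ā` is the block of `P ⊔ P^A_⊥` containing `A`. -/
def EmbClosure (n : ℕ) (x : XN n) : XN n :=
  ({y | ∃ a ∈ x.1, (x.2 ⊔ modp n x.1) y a}, x.2 ⊔ modp n x.1)

/-- An embedded subset is a pair that coincides with its closure. -/
def IsEmbedded (n : ℕ) (x : XN n) : Prop := EmbClosure n x = x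

/-- The lattice `ℰ^N` of embedded subsets, with the induced order. -/
abbrev Emb (n : ℕ) := {x : XN n // IsEmbedded n x}

lemma modp_le_of_subsingleton {n : ℕ} {A : Set (Fin n)} (h : A.Subsingleton)
    (Q : Setoid (Fin n)) : modp n A ≤ Q := by
  rw [Setoid.le_def]
  intro x y hxy
  rcases hxy with rfl | ⟨hx, hy⟩
  · exact Q.refl' x
  · obtain rfl := h hx hy
    exact Q.refl' x

lemma modp_eq_bot_of_subsingleton {n : ℕ} {A : Set (Fin n)} (h : A.Subsingleton) :
    modp n A = ⊥ :=
  le_antisymm (modp_le_of_subsingleton h ⊥) bot_le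

lemma embedded_empty (n : ℕ) (Q : Setoid (Fin n)) : IsEmbedded n (∅, Q) := by
  unfold IsEmbedded EmbClosure
  refine Prod.ext ?_ ?_
  · simp
  · simpa using sup_eq_left.mpr (modp_le_of_subsingleton Set.subsingleton_empty Q)

lemma embedded_univ_top (n : ℕ) : IsEmbedded n (Set.univ, ⊤) := by
  unfold IsEmbedded EmbClosure
  refine Prod.ext ?_ ?_
  · ext y
    simp only [Set.mem_setOf_eq, Set.mem_univ, iff_true]
    exact ⟨y, trivial, Setoid.refl' _ y⟩
  · exact sup_eq_left.mpr le_top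

lemma embedded_singleton (n : ℕ) (i : Fin n) : IsEmbedded n ({i}, ⊥) := by
  have hb : modp n ({i} : Set (Fin n)) = ⊥ :=
    modp_eq_bot_of_subsingleton Set.subsingleton_singleton
  unfold IsEmbedded EmbClosure
  refine Prod.ext ?_ ?_
  · ext y
    simp only [Set.mem_setOf_eq, hb, sup_idem, Set.mem_singleton_iff]
    constructor
    · rintro ⟨a, ha, hrel⟩
      subst ha
      change ((⊥ : Setoid (Fin n)) ⊔ modp n {_}) y _ at hrel
      rw [hb, sup_idem] at hrel
      simpa [Setoid.bot_def] using hrel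
    · rintro rfl
      exact ⟨y, rfl, Setoid.refl' _ y⟩
  · simp [hb]

/-- The bottom element `(∅, P_⊥)` of `ℰ^N`. -/
def botE (n : ℕ) : Emb n := ⟨(∅, ⊥), embedded_empty n ⊥⟩

/-- The top element `(N, P^⊤)` of `ℰ^N`. -/
def topE (n : ℕ) : Emb n := ⟨(Set.univ, ⊤), embedded_univ_top n⟩

/-- The atom `({i}, P_⊥)` of `ℰ^N`. -/
def atomS (n : ℕ) (i : Fin n) : Emb n := ⟨({i}, ⊥), embedded_singleton n i⟩

/-- The atom `(∅, [ij])` of `ℰ^N`, where `[ij]` is the atom of the partition lattice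
whose unique non-singleton block is the pair `{i, j}`. -/
def atomP (n : ℕ) (i j : Fin n) : Emb n := ⟨(∅, modp n {i, j}), embedded_empty n _⟩

/-- A pair is an atom candidate: of the form `({i},P_⊥)` or `(∅,[ij])` with `i ≠ j`. -/
def IsAtomPair (n : ℕ) (a : XN n) : Prop :=
  (∃ i : Fin n, a = ({i}, ⊥)) ∨ ∃ i j : Fin n, i ≠ j ∧ a = (∅, modp n {i, j})

/-- The number of blocks `|P|` of a partition. -/
noncomputable def numBlocks {α : Type*} (P : Setoid α) : ℕ := P.classes.ncard

/-- The rank function `r(A,P) = (n − |P|) + min{|A|,1}` of `ℰ^N`. -/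
noncomputable def erank (n : ℕ) (x : XN n) : ℕ := (n - numBlocks x.2) + min x.1.ncard 1

/-- The partition `Q^S` of `S` induced by a partition `Q` of `N`. -/
def indPart {n : ℕ} (S : Set (Fin n)) (Q : Setoid (Fin n)) : Setoid S :=
  Setoid.comap Subtype.val Q

/-- `mu` is the Möbius function of the (finite) poset `α`. -/
def IsMobius {α : Type*} [PartialOrder α] (mu : α → α → ℤ) : Prop :=
  (∀ x, mu x x = 1) ∧
  (∀ x y, ¬x ≤ y → mu x y = 0) ∧
  (∀ x y, x < y → mu x y = -∑ᶠ z ∈ Set.Ico x y, mu x z)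

theorem embClosure_isClosureOperator (n : ℕ) (hn : 1 ≤ n) :
    ∀ x y : XN n,
      (x ≤ EmbClosure n x) ∧
      (y ≤ x → EmbClosure n y ≤ EmbClosure n x) ∧
      (EmbClosure n (EmbClosure n x) = EmbClosure n x) := by
  intro x y
  refine ⟨⟨fun a ha => ⟨a, ha, Setoid.refl' _ a⟩, le_sup_left⟩, ?_, ?_⟩
  · rintro ⟨h1, h2⟩
    have hm : modp n y.1 ≤ modp n x.1 := by
      rw [Setoid.le_def]
      rintro u v (rfl | ⟨hu, hv⟩)
      · exact Or.inl rfl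
      · exact Or.inr ⟨h1 hu, h1 hv⟩
    have hs : y.2 ⊔ modp n y.1 ≤ x.2 ⊔ modp n x.1 :=
      sup_le (le_trans h2 le_sup_left) (le_trans hm le_sup_right)
    refine ⟨?_, hs⟩
    rintro z ⟨a, ha, hrel⟩
    exact ⟨a, h1 ha, hs hrel⟩
  · set R := x.2 ⊔ modp n x.1 with hR
    set Abar := {z | ∃ a ∈ x.1, R z a} with hA
    have hmA : modp n Abar ≤ R := by
      rw [Setoid.le_def]
      rintro u v (rfl | ⟨⟨a, ha, hua⟩, ⟨b, hb, hvb⟩⟩)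
      · exact R.refl' u
      · have hab : R a b := (le_sup_right : modp n x.1 ≤ R) (Or.inr ⟨ha, hb⟩)
        exact R.trans' hua (R.trans' hab (R.symm' hvb))
    have h2 : R ⊔ modp n Abar = R := sup_eq_left.mpr hmA
    show ({z | ∃ a ∈ Abar, (R ⊔ modp n Abar) z a}, R ⊔ modp n Abar) = (Abar, R)
    refine Prod.ext ?_ h2
    ext z
    simp only [Set.mem_setOf_eq]
    constructor
    · rintro ⟨a, ⟨b, hb, hab⟩, hza⟩
      have hza' : R z a := h2 ▸ hza
      exact ⟨b, hb, R.trans' hza' hab⟩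
    · rintro ⟨a, ha, hza⟩
      exact ⟨z, ⟨a, ha, hza⟩, Setoid.refl' _ z⟩
end

section
/- The Whitney numbers of the second kind of ℰ^n are the Stirling numbers of the second kind shifted by one: for 0 ≤ k ≤ n, the number of embedded subsets (A,P) ∈ ℰ^N of rank k equals S_{n+1, n+1−k}, the number of partitions of an (n+1)-set into n+1−k blocks. -/
open scoped BigOperators

-- new material

lemma class_eq_iff (P : Setoid (Fin n)) (i j : Fin n) :
    {y | P y i} = {y | P y j} ↔ P i j := by
  constructor
  · intro h
    have : i ∈ {y | P y j} := h ▸ (P.refl' i)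
    exact this
  · intro h
    ext y
    exact ⟨fun hy => P.trans' hy h, fun hy => P.trans' hy (P.symm' h)⟩

lemma isEmbedded_iff (A : Set (Fin n)) (P : Setoid (Fin n)) :
    IsEmbedded n (A, P) ↔ A = ∅ ∨ ∃ a, A = {y | P y a} := by
  constructor
  · intro h
    rw [IsEmbedded, EmbClosure, Prod.mk.injEq] at h
    obtain ⟨h1, h2⟩ := h
    simp only at h1 h2
    rcases Set.eq_empty_or_nonempty A with hA | ⟨a, ha⟩
    · exact Or.inl hA
    refine Or.inr ⟨a, ?_⟩
    have hle : modp n A ≤ P := sup_eq_left.mp h2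
    ext y
    constructor
    · intro hy
      exact hle (Or.inr ⟨hy, ha⟩)
    · intro hy
      have : y ∈ {y | ∃ a ∈ A, (P ⊔ modp n A) y a} := ⟨a, ha, (Setoid.le_def.mp le_sup_left) hy⟩
      exact h1 ▸ this
  · rintro (rfl | ⟨a, rfl⟩)
    · rw [IsEmbedded, EmbClosure, Prod.mk.injEq]
      constructor
      · simp
      · simp only
        refine sup_eq_left.mpr ?_
        rw [Setoid.le_def]
        rintro x y (rfl | ⟨hx, hy⟩)
        · exact P.refl' x
        · exact absurd hx (Set.notMem_empty x)
    · rw [IsEmbedded, EmbClosure, Prod.mk.injEq]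
      have hle : modp n {y | P y a} ≤ P := by
        rw [Setoid.le_def]
        rintro x y (rfl | ⟨hx, hy⟩)
        · exact P.refl' x
        · exact P.trans' hx (P.symm' hy)
      have h2 : P ⊔ modp n {y | P y a} = P := sup_eq_left.mpr hle
      refine ⟨?_, h2⟩
      simp only [h2]
      ext y
      simp only [Set.mem_setOf_eq]
      constructor
      · rintro ⟨b, hb, hyb⟩
        exact P.trans' ((Setoid.le_def.mp h2.le) hyb) hb
      · intro hy
        exact ⟨y, hy, (Setoid.le_def.mp le_sup_left) (P.refl' y)⟩

/-- forward map data -/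
def fmap (x : XN n) : Fin (n + 1) → Set (Fin n) :=
  Fin.lastCases x.1 (fun i => {y | x.2 y i})

def toQ (x : XN n) : Setoid (Fin (n + 1)) := Setoid.ker (fmap x)

def fromA (Q : Setoid (Fin (n + 1))) : XN n :=
  ({i | Q i.castSucc (Fin.last n)}, Setoid.comap Fin.castSucc Q)

lemma fromA_embedded (Q : Setoid (Fin (n + 1))) : IsEmbedded n (fromA Q) := by
  rw [fromA, isEmbedded_iff]
  rcases Set.eq_empty_or_nonempty {i : Fin n | Q i.castSucc (Fin.last n)} with hA | ⟨a, ha⟩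
  · exact Or.inl hA
  · refine Or.inr ⟨a, ?_⟩
    ext y
    simp only [Set.mem_setOf_eq, Setoid.comap_rel]
    exact ⟨fun hy => Q.trans' hy (Q.symm' ha), fun hy => Q.trans' hy ha⟩

lemma left_inv {x : XN n} (hx : IsEmbedded n x) : fromA (toQ x) = x := by
  obtain ⟨A, P⟩ := x
  rw [fromA, Prod.mk.injEq]
  constructor
  · ext i
    unfold toQ
    simp only [Set.mem_setOf_eq, toQ, Setoid.ker_def, fmap, Fin.lastCases_castSucc,
      Fin.lastCases_last]
    rcases (isEmbedded_iff A P).mp hx with rfl | ⟨a, rfl⟩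
    · simp only [Set.mem_empty_iff_false, iff_false]
      intro h
      exact absurd (h ▸ P.refl' i : i ∈ (∅ : Set (Fin n))) (Set.notMem_empty i)
    · simp only [Set.mem_setOf_eq]
      exact (class_eq_iff P i a)
  · apply Setoid.ext
    intro i j
    unfold toQ
    simp only [Setoid.comap_rel, toQ, Setoid.ker_def, fmap, Fin.lastCases_castSucc]
    exact class_eq_iff P i j

lemma right_inv (Q : Setoid (Fin (n + 1))) : toQ (fromA Q) = Q := by
  apply Setoid.ext
  intro x y
  unfold toQ
  simp only [toQ, Setoid.ker_def]
  induction x using Fin.lastCases with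
  | last =>
    induction y using Fin.lastCases with
    | last => simp [Q.refl']
    | cast j =>
      simp only [fmap, fromA, Fin.lastCases_last, Fin.lastCases_castSucc]
      constructor
      · intro h
        have : j ∈ {i : Fin n | Q i.castSucc (Fin.last n)} := by
          rw [h]; exact (Setoid.comap Fin.castSucc Q).refl' j
        exact Q.symm' this
      · intro h
        ext z
        simp only [Set.mem_setOf_eq, Setoid.comap_rel]
        exact ⟨fun hz => Q.trans' hz h, fun hz => Q.trans' hz (Q.symm' h)⟩
  | cast i =>
    induction y using Fin.lastCases with
    | last =>
      simp only [fmap, fromA, Fin.lastCases_last, Fin.lastCases_castSucc]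
      constructor
      · intro h
        have : i ∈ {i : Fin n | Q i.castSucc (Fin.last n)} := by
          rw [← h]; exact (Setoid.comap Fin.castSucc Q).refl' i
        exact this
      · intro h
        ext z
        simp only [Set.mem_setOf_eq, Setoid.comap_rel]
        exact ⟨fun hz => Q.trans' hz h, fun hz => Q.trans' hz (Q.symm' h)⟩
    | cast j =>
      simp only [fmap, fromA, Fin.lastCases_castSucc]
      unfold fromA
      rw [show ({y | (Setoid.comap Fin.castSucc Q) y i} = {y | (Setoid.comap Fin.castSucc Q) y j}
          ↔ (Setoid.comap Fin.castSucc Q) i j) from class_eq_iff _ i j]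
      exact Setoid.comap_rel _ _ _ _

lemma numBlocks_eq_card_quot {α : Type*} (P : Setoid α) :
    numBlocks P = Nat.card (Quotient P) := by
  rw [numBlocks, ← Nat.card_coe_set_eq]
  exact (Nat.card_congr (Setoid.quotientEquivClasses P)).symm

lemma range_fmap (x : XN n) : Set.range (fmap x) = insert x.1 x.2.classes := by
  ext S
  constructor
  · rintro ⟨z, rfl⟩
    induction z using Fin.lastCases with
    | last => left; simp [fmap]
    | cast i => right; exact ⟨i, by simp [fmap]⟩
  · rintro (rfl | ⟨i, rfl⟩)
    · exact ⟨Fin.last n, by simp [fmap]⟩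
    · exact ⟨i.castSucc, by simp [fmap]⟩

lemma numBlocks_toQ (x : XN n) :
    numBlocks (toQ x) = (insert x.1 x.2.classes).ncard := by
  rw [numBlocks_eq_card_quot, toQ, Nat.card_congr (Setoid.quotientKerEquivRange (fmap x)),
    Nat.card_coe_set_eq, range_fmap]

lemma numBlocks_le (P : Setoid (Fin n)) : numBlocks P ≤ n := by
  rw [numBlocks_eq_card_quot]
  have := Nat.card_le_card_of_surjective (Quotient.mk'' : Fin n → Quotient P)
    Quotient.mk''_surjective
  simpa using this

lemma numBlocks_pos (hn : 1 ≤ n) (P : Setoid (Fin n)) : 1 ≤ numBlocks P := by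
  rw [numBlocks_eq_card_quot]
  have : Nonempty (Quotient P) := ⟨Quotient.mk P ⟨0, hn⟩⟩
  exact Nat.card_pos

lemma rank_iff (hn : 1 ≤ n) (k : ℕ) (hk : k ≤ n) (x : Emb n) :
    erank n x.val = k ↔ numBlocks (toQ x.val) = n + 1 - k := by
  obtain ⟨⟨A, P⟩, hx⟩ := x
  have hple := numBlocks_le P
  have hppos := numBlocks_pos hn P
  rw [numBlocks_toQ]
  rcases (isEmbedded_iff A P).mp hx with rfl | ⟨a, rfl⟩
  · have hem : (∅ : Set (Fin n)) ∉ P.classes := by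
      rintro ⟨y, hy⟩
      exact absurd (hy ▸ P.refl' y : y ∈ (∅ : Set (Fin n))) (Set.notMem_empty y)
    rw [Set.ncard_insert_of_notMem hem (Set.toFinite _)]
    simp only [erank, Set.ncard_empty]
    unfold numBlocks at *
    omega
  · have hmem : {y | P y a} ∈ P.classes := Setoid.mem_classes P a
    rw [Set.insert_eq_self.mpr hmem]
    have hA1 : 1 ≤ ({y | P y a} : Set (Fin n)).ncard :=
      (Set.ncard_pos (Set.toFinite _)).mpr ⟨a, P.refl' a⟩
    simp only [erank]
    unfold numBlocks at *
    omega

noncomputable def embEquiv (n : ℕ) : Emb n ≃ Setoid (Fin (n + 1)) where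
  toFun x := toQ x.val
  invFun Q := ⟨fromA Q, fromA_embedded Q⟩
  left_inv x := Subtype.ext (left_inv x.2)
  right_inv := right_inv


theorem whitney_second (n : ℕ) (hn : 1 ≤ n) (k : ℕ) (hk : k ≤ n) :
    Nat.card {x : Emb n // erank n x.val = k} =
      Nat.card {P : Setoid (Fin (n + 1)) // numBlocks P = n + 1 - k} :=
  Nat.card_congr <| Equiv.subtypeEquiv (embEquiv n) (fun x => rank_iff hn k hk x)
end
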